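/- The volume V(r) = π^{r/2}/Γ(r/2+1) of the unit ball in ℝ^r satisfies V(a+b) ≤ V(a)·V(b) for all nonnegative integers a, b. -/

import Mathlib

open Real

lemma gamma_superadd {x y : ℝ} (hx : 0 ≤ x) (hy : 0 ≤ y) :
    Real.Gamma (x + 1) * Real.Gamma (y + 1) ≤ Real.Gamma (x + y + 1) := by
  rcases eq_or_lt_of_le (by positivity : (0:ℝ) ≤ x + y) with h | h
  · have hx0 : x = 0 := by linarith [hx, hy]
    have hy0 : y = 0 := by linarith
    simp [hx0, hy0, Real.Gamma_one]
  have f := Real.convexOn_log_Gamma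
  set l : ℝ := y / (x + y) with hl
  have hl0 : 0 ≤ l := by positivity
  have hl1 : l ≤ 1 := by rw [hl, div_le_one h]; linarith
  have hsum : l + (1 - l) = 1 := by ring
  have h1 : (1:ℝ) ∈ Set.Ioi (0:ℝ) := by norm_num
  have h2 : x + y + 1 ∈ Set.Ioi (0:ℝ) := by simp; linarith
  have key : l • (1:ℝ) + (1 - l) • (x + y + 1) = x + 1 := by
    field_simp [hl]
    have hlxy : l * (x + y) = y := by rw [hl]; field_simp [h.ne']
    linear_combination (-1 : ℝ) * hlxy
  have key2 : (1 - l) • (1:ℝ) + l • (x + y + 1) = y + 1 := by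
    field_simp [hl]
    have hlxy : l * (x + y) = y := by rw [hl]; field_simp [h.ne']
    linear_combination hlxy
  have hb := f.2 h1 h2 hl0 (by linarith) hsum
  have hc := f.2 h1 h2 (by linarith : 0 ≤ 1 - l) hl0 (by ring)
  rw [key] at hb
  rw [key2] at hc
  simp only [Function.comp_apply, Real.Gamma_one, Real.log_one, smul_eq_mul, mul_zero,
    zero_add, mul_zero, add_zero] at hb hc
  have hsumlog : Real.log (Real.Gamma (x + 1)) + Real.log (Real.Gamma (y + 1)) ≤
      Real.log (Real.Gamma (x + y + 1)) := by nlinarith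
  have p1 : 0 < Real.Gamma (x + 1) := Real.Gamma_pos_of_pos (by linarith)
  have p2 : 0 < Real.Gamma (y + 1) := Real.Gamma_pos_of_pos (by linarith)
  have p3 : 0 < Real.Gamma (x + y + 1) := Real.Gamma_pos_of_pos (by linarith)
  calc Real.Gamma (x + 1) * Real.Gamma (y + 1)
      = Real.exp (Real.log (Real.Gamma (x + 1)) + Real.log (Real.Gamma (y + 1))) := by
        rw [Real.exp_add, Real.exp_log p1, Real.exp_log p2]
    _ ≤ Real.exp (Real.log (Real.Gamma (x + y + 1))) := Real.exp_le_exp.mpr hsumlog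
    _ = Real.Gamma (x + y + 1) := Real.exp_log p3

/-- The volume `V(r) = π^(r/2) / Γ(r/2 + 1)` of the unit ball in `ℝ^r` satisfies
`V(a+b) ≤ V(a) * V(b)` for all nonnegative integers `a`, `b`. -/
theorem unitBallVolume_add_le_mul (a b : ℕ) :
    (Real.pi ^ (((a + b : ℕ) : ℝ) / 2) / Real.Gamma (((a + b : ℕ) : ℝ) / 2 + 1)) ≤
      (Real.pi ^ ((a : ℝ) / 2) / Real.Gamma ((a : ℝ) / 2 + 1)) *
        (Real.pi ^ ((b : ℝ) / 2) / Real.Gamma ((b : ℝ) / 2 + 1)) := by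
  have hx : (0:ℝ) ≤ (a : ℝ) / 2 := by positivity
  have hy : (0:ℝ) ≤ (b : ℝ) / 2 := by positivity
  have hG := gamma_superadd hx hy
  have p1 : 0 < Real.Gamma ((a:ℝ) / 2 + 1) := Real.Gamma_pos_of_pos (by linarith)
  have p2 : 0 < Real.Gamma ((b:ℝ) / 2 + 1) := Real.Gamma_pos_of_pos (by linarith)
  have hcast : ((a + b : ℕ) : ℝ) / 2 = (a:ℝ)/2 + (b:ℝ)/2 := by push_cast; ring
  rw [hcast, Real.rpow_add Real.pi_pos, div_mul_div_comm]
  gcongr
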